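/- Let F be a field, m and E finite types, and D a matrix over F with rows indexed by m and columns indexed by E; for S ⊆ E let r(S) be the rank of the submatrix of columns in S, and let T_D(X,Y) = Σ_{S ⊆ E} X^{r(E) − r(S)} · Y^{|S| − r(S)}. Define R_D(λ) = Σ_{S ⊆ E} (−1)^{|E| − |S|} · λ^{|S| − r(S)} ∈ ℤ[λ]. Then R_D(λ) = (−1)^{|E| − r(E)} · T_D(−1, −λ), i.e., R_D equals (−1)^{|E|−r(E)} times the polynomial obtained from T_D by substituting X = −1 and Y = −λ. -/

import Mathlib

open MvPolynomial

/-- The rank of the submatrix of `D` consisting of the columns indexed by `S`. -/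
noncomputable def colRank {F : Type*} [Field F] {m E : Type*} [Fintype m]
    (D : Matrix m E F) (S : Finset E) : ℕ :=
  Module.finrank F (Submodule.span F ((fun σ i => D i σ) '' (S : Set E)))

/-- The corank–nullity (Tutte–Krushkal–Renardy) polynomial of the matrix `D`:
`T_D(X,Y) = Σ_{S ⊆ E} X^(r(E) − r(S)) · Y^(|S| − r(S))`. -/
noncomputable def tutteKR {F : Type*} [Field F] {m E : Type*} [Fintype m] [Fintype E]
    (D : Matrix m E F) : MvPolynomial (Fin 2) ℤ :=
  ∑ S : Finset E,
    X 0 ^ (colRank D Finset.univ - colRank D S) * X 1 ^ (S.card - colRank D S)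

/-- The Bott polynomial of the matrix `D`:
`R_D(λ) = Σ_{S ⊆ E} (−1)^(|E| − |S|) · λ^(|S| − r(S)) ∈ ℤ[λ]`. -/
noncomputable def bott {F : Type*} [Field F] {m E : Type*} [Fintype m] [Fintype E]
    (D : Matrix m E F) : Polynomial ℤ :=
  ∑ S : Finset E,
    (-1 : Polynomial ℤ) ^ (Fintype.card E - S.card) *
      Polynomial.X ^ (S.card - colRank D S)


lemma colRank_le_card {F : Type*} [Field F] {m E : Type*} [Fintype m]
    (D : Matrix m E F) (S : Finset E) : colRank D S ≤ S.card := by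
  classical
  unfold colRank
  have h : (fun σ i => D i σ) '' (S : Set E)
      = ((S.image fun σ i => D i σ : Finset (m → F)) : Set _) := by
    simp [Finset.coe_image]
  rw [h]
  exact (finrank_span_finset_le_card _).trans (Finset.card_image_le)

lemma colRank_le_univ {F : Type*} [Field F] {m E : Type*} [Fintype m] [Fintype E]
    (D : Matrix m E F) (S : Finset E) : colRank D S ≤ colRank D Finset.univ := by
  classical
  unfold colRank
  have h : Submodule.span F ((fun σ i => D i σ) '' (S : Set E)) ≤
      Submodule.span F ((fun σ i => D i σ) '' ((Finset.univ : Finset E) : Set E)) :=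
    Submodule.span_mono (Set.image_mono (by simp))
  have : FiniteDimensional F (Submodule.span F
      ((fun σ i => D i σ) '' ((Finset.univ : Finset E) : Set E))) :=
    FiniteDimensional.span_of_finite F (Set.toFinite _)
  exact Submodule.finrank_mono h

/-- `R_D(λ) = (−1)^(|E| − r(E)) · T_D(−1, −λ)`. -/
theorem statement4 {F : Type*} [Field F] {m E : Type*} [Fintype m] [Fintype E]
    (D : Matrix m E F) :
    bott D = (-1 : Polynomial ℤ) ^ (Fintype.card E - colRank D Finset.univ) *
      MvPolynomial.eval₂ (Int.castRingHom (Polynomial ℤ))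
        ![(-1 : Polynomial ℤ), -Polynomial.X] (tutteKR D) := by
  unfold bott tutteKR
  rw [MvPolynomial.eval₂_sum, Finset.mul_sum]
  refine Finset.sum_congr rfl fun S _ => ?_
  rw [MvPolynomial.eval₂_mul, MvPolynomial.eval₂_pow, MvPolynomial.eval₂_pow,
    MvPolynomial.eval₂_X, MvPolynomial.eval₂_X]
  simp only [Matrix.cons_val_zero, Matrix.cons_val_one, Matrix.head_cons]
  have hrS : colRank D S ≤ S.card := colRank_le_card D S
  have hrU : colRank D S ≤ colRank D Finset.univ := colRank_le_univ D S
  have hSE : S.card ≤ Fintype.card E := Finset.card_le_univ S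
  have hUE : colRank D Finset.univ ≤ Fintype.card E :=
    (colRank_le_card D Finset.univ).trans_eq (by simp)
  have hx : (-Polynomial.X : Polynomial ℤ) ^ (S.card - colRank D S)
      = (-1) ^ (S.card - colRank D S) * Polynomial.X ^ (S.card - colRank D S) := by
    rw [neg_pow]
  rw [hx]
  ring_nf
  rw [mul_assoc, mul_assoc, ← pow_add, ← pow_add]
  congr 1
  have h2 : (S.card - colRank D S) + ((Fintype.card E - colRank D Finset.univ) +
      (colRank D Finset.univ - colRank D S))
      = (Fintype.card E - S.card) + 2 * (S.card - colRank D S) := by omega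
  rw [h2, pow_add, pow_mul, neg_one_sq, one_pow, mul_one]
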